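/- Let γ ∈ SL(2,ℂ) with ‖γ‖ > 1, with Cartan poles s and n. For α ∈ (0,1): γ maps the closed chordal disc of center s and radius α onto the complement of the open chordal disc D(n, 1/2) if and only if α = √(3/(3 + ‖γ‖⁴)). -/

import Mathlib

open Complex Set

/-- Chordal distance on ℂP¹ = ℂ ∪ {∞}, modeled as `Option ℂ` (`none` = ∞). -/
noncomputable def chordal : Option ℂ → Option ℂ → ℝ
  | some z₁, some z₂ =>
      ‖z₁ - z₂‖ /
        (Real.sqrt (1 + ‖z₁‖ ^ 2) * Real.sqrt (1 + ‖z₂‖ ^ 2))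
  | some z, none => 1 / Real.sqrt (1 + ‖z‖ ^ 2)
  | none, some z => 1 / Real.sqrt (1 + ‖z‖ ^ 2)
  | none, none => 0

/-- Möbius action of a 2×2 complex matrix on ℂP¹. -/
noncomputable def mobius (g : Matrix (Fin 2) (Fin 2) ℂ) : Option ℂ → Option ℂ
  | some z => if g 1 0 * z + g 1 1 = 0 then none
              else some ((g 0 0 * z + g 0 1) / (g 1 0 * z + g 1 1))
  | none => if g 1 0 = 0 then none else some (g 0 0 / g 1 0)

/-- Operator norm of a 2×2 complex matrix acting on ℂ² with Euclidean norm. -/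
noncomputable def opNorm (g : Matrix (Fin 2) (Fin 2) ℂ) : ℝ :=
  ‖LinearMap.toContinuousLinearMap (Matrix.toEuclideanLin g)‖

/-- Membership in SU(2). -/
def SU2 (k : Matrix (Fin 2) (Fin 2) ℂ) : Prop := k.det = 1 ∧ k.conjTranspose * k = 1

/-- Open chordal disc. -/
def Dopen (z : Option ℂ) (α : ℝ) : Set (Option ℂ) := {w | chordal w z < α}

/-- Closed chordal disc. -/
def Dclosed (z : Option ℂ) (α : ℝ) : Set (Option ℂ) := {w | chordal w z ≤ α}
abbrev SL2 := Matrix.SpecialLinearGroup (Fin 2) ℂ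

namespace CPHelp

def act (g : Matrix (Fin 2) (Fin 2) ℂ) (v : ℂ × ℂ) : ℂ × ℂ :=
  (g 0 0 * v.1 + g 0 1 * v.2, g 1 0 * v.1 + g 1 1 * v.2)

noncomputable def proj (v : ℂ × ℂ) : Option ℂ := if v.2 = 0 then none else some (v.1 / v.2)

def lift : Option ℂ → ℂ × ℂ
  | some z => (z, 1)
  | none => (1, 0)

noncomputable def nrm (v : ℂ × ℂ) : ℝ :=
  Real.sqrt (‖v.1‖ ^ 2 + ‖v.2‖ ^ 2)

noncomputable def cross (v w : ℂ × ℂ) : ℝ := ‖v.1 * w.2 - w.1 * v.2‖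

lemma lift_ne (z : Option ℂ) : lift z ≠ 0 := by
  cases z <;> simp [lift, Prod.ext_iff]

lemma proj_lift (z : Option ℂ) : proj (lift z) = z := by
  cases z <;> simp [lift, proj]

lemma mobius_proj (g : Matrix (Fin 2) (Fin 2) ℂ) (v : ℂ × ℂ) (hv : v ≠ 0) :
    mobius g (proj v) = proj (act g v) := by
  obtain ⟨a, b⟩ := v
  by_cases hb : b = 0
  · subst hb
    have ha : a ≠ 0 := by simpa [Prod.ext_iff] using hv
    simp only [proj, act, if_pos rfl, mobius, mul_zero, add_zero]
    by_cases h10 : g 1 0 = 0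
    · simp [h10, ha]
    · rw [if_pos trivial, if_neg (by simp [h10, ha])]
      show some (g 0 0 / g 1 0) = _
      rw [mul_comm (g 0 0) a, mul_comm (g 1 0) a, mul_div_mul_left _ _ ha,
        if_neg (by simp [ha, h10])]
  · simp only [proj, if_neg hb, mobius, act]
    have key : g 1 0 * (a / b) + g 1 1 = (g 1 0 * a + g 1 1 * b) / b := by
      field_simp
    rw [key]
    by_cases hd : g 1 0 * a + g 1 1 * b = 0
    · simp [hd, hb]
    · rw [if_neg (by simp [hd, hb])]; refine Eq.trans ?_ (if_neg hd).symm
      congr 1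
      field_simp

lemma act_mul (g h : Matrix (Fin 2) (Fin 2) ℂ) (v : ℂ × ℂ) :
    act (g * h) v = act g (act h v) := by
  simp only [act, Matrix.mul_apply, Fin.sum_univ_two, Prod.ext_iff]
  constructor <;> ring

lemma act_one (v : ℂ × ℂ) : act 1 v = v := by
  simp [act, Matrix.one_apply]

lemma act_ne_zero {g : Matrix (Fin 2) (Fin 2) ℂ} (hg : g.det ≠ 0) {v : ℂ × ℂ}
    (hv : v ≠ 0) : act g v ≠ 0 := by
  rw [Matrix.det_fin_two] at hg
  intro h
  rw [Prod.ext_iff] at h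
  obtain ⟨h1, h2⟩ := h
  simp only [act, Prod.fst_zero, Prod.snd_zero] at h1 h2
  apply hv
  rw [Prod.ext_iff]
  constructor
  · by_contra hv1
    apply hg
    have : (g 0 0 * g 1 1 - g 0 1 * g 1 0) * v.1 = 0 := by
      linear_combination g 1 1 * h1 - g 0 1 * h2
    rcases mul_eq_zero.1 this with h | h
    · exact h
    · exact absurd h hv1
  · by_contra hv2
    apply hg
    have : (g 0 0 * g 1 1 - g 0 1 * g 1 0) * v.2 = 0 := by
      linear_combination g 0 0 * h2 - g 1 0 * h1
    rcases mul_eq_zero.1 this with h | h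
    · exact h
    · exact absurd h hv2

lemma mobius_mul (g h : Matrix (Fin 2) (Fin 2) ℂ) (hh : h.det ≠ 0) (z : Option ℂ) :
    mobius (g * h) z = mobius g (mobius h z) := by
  conv_lhs => rw [← proj_lift z]
  conv_rhs => rw [← proj_lift z]
  rw [mobius_proj _ _ (lift_ne z), mobius_proj _ _ (lift_ne z), act_mul,
    mobius_proj _ _ (act_ne_zero hh (lift_ne z))]

lemma mobius_one (z : Option ℂ) : mobius 1 z = z := by
  cases z <;> simp [mobius, Matrix.one_apply]

lemma nrm_pos {v : ℂ × ℂ} (hv : v ≠ 0) : 0 < nrm v := by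
  apply Real.sqrt_pos.2
  have h : v.1 ≠ 0 ∨ v.2 ≠ 0 := by
    by_contra h
    push_neg at h
    exact hv (Prod.ext h.1 h.2)
  rcases h with h | h
  · have := norm_pos_iff.mpr h
    nlinarith [sq_nonneg (‖v.2‖)]
  · have := norm_pos_iff.mpr h
    nlinarith [sq_nonneg (‖v.1‖)]

lemma sqrt_one_add (a b : ℂ) (hb : b ≠ 0) :
    Real.sqrt (1 + ‖a / b‖ ^ 2) = nrm (a, b) / ‖b‖ := by
  have hb' : (0:ℝ) < ‖b‖ := norm_pos_iff.mpr hb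
  have : 1 + ‖a / b‖ ^ 2 =
      (‖a‖ ^ 2 + ‖b‖ ^ 2) / ‖b‖ ^ 2 := by
    rw [norm_div, div_pow]
    field_simp
    ring
  rw [this, Real.sqrt_div (by positivity), Real.sqrt_sq (norm_nonneg b)]
  rfl

lemma chordal_proj (v w : ℂ × ℂ) (hv : v ≠ 0) (hw : w ≠ 0) :
    chordal (proj v) (proj w) = cross v w / (nrm v * nrm w) := by
  obtain ⟨a, b⟩ := v
  obtain ⟨c, d⟩ := w
  by_cases hb : b = 0 <;> by_cases hd : d = 0
  · subst hb hd
    have ha : a ≠ 0 := by simpa [Prod.ext_iff] using hv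
    simp [proj, chordal, cross]
  · subst hb
    have ha : a ≠ 0 := by simpa [Prod.ext_iff] using hv
    have ha' : (0:ℝ) < ‖a‖ := norm_pos_iff.mpr ha
    have hd' : (0:ℝ) < ‖d‖ := norm_pos_iff.mpr hd
    have hn := nrm_pos hw
    have hna : nrm (a, 0) = ‖a‖ := by
      unfold nrm
      simp only [norm_zero]
      rw [show ‖a‖ ^ 2 + (0:ℝ) ^ 2 = ‖a‖ ^ 2 by ring,
        Real.sqrt_sq (norm_nonneg a)]
    have hcr : cross (a, 0) (c, d) = ‖a‖ * ‖d‖ := by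
      unfold cross
      simp [map_mul]
    simp only [proj, if_pos rfl, if_neg hd]
    show 1 / Real.sqrt (1 + ‖c/d‖ ^ 2) = _
    rw [sqrt_one_add c d hd, hna, hcr, one_div_div]
    field_simp
  · subst hd
    have hc : c ≠ 0 := by simpa [Prod.ext_iff] using hw
    have hc' : (0:ℝ) < ‖c‖ := norm_pos_iff.mpr hc
    have hb' : (0:ℝ) < ‖b‖ := norm_pos_iff.mpr hb
    have hn := nrm_pos hv
    have hnc : nrm (c, 0) = ‖c‖ := by
      unfold nrm
      simp only [norm_zero]
      rw [show ‖c‖ ^ 2 + (0:ℝ) ^ 2 = ‖c‖ ^ 2 by ring,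
        Real.sqrt_sq (norm_nonneg c)]
    have hcr : cross (a, b) (c, 0) = ‖c‖ * ‖b‖ := by
      unfold cross
      rw [mul_zero, zero_sub, norm_neg, norm_mul]
    simp only [proj, if_pos rfl, if_neg hb]
    show 1 / Real.sqrt (1 + ‖a/b‖ ^ 2) = _
    rw [sqrt_one_add a b hb, hnc, hcr, one_div_div]
    field_simp
  · simp only [proj, if_neg hb, if_neg hd]
    show ‖a/b - c/d‖ / (Real.sqrt (1 + ‖a/b‖ ^ 2) *
        Real.sqrt (1 + ‖c/d‖ ^ 2)) = _
    rw [sqrt_one_add a b hb, sqrt_one_add c d hd]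
    have habs : ‖a/b - c/d‖ =
        ‖a * d - b * c‖ / (‖b‖ * ‖d‖) := by
      rw [div_sub_div a c hb hd, norm_div, norm_mul]
    rw [habs]
    unfold cross nrm
    rw [mul_comm c b]
    have h1 : (0:ℝ) < ‖b‖ := norm_pos_iff.mpr hb
    have h2 : (0:ℝ) < ‖d‖ := norm_pos_iff.mpr hd
    have h3 := nrm_pos hv
    have h4 := nrm_pos hw
    unfold nrm at h3 h4
    field_simp

lemma cross_act {g : Matrix (Fin 2) (Fin 2) ℂ} (hg : g.det = 1) (v w : ℂ × ℂ) :
    cross (act g v) (act g w) = cross v w := by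
  rw [Matrix.det_fin_two] at hg
  unfold cross act
  congr 1
  linear_combination (v.1 * w.2 - w.1 * v.2) * hg

lemma mc (z : ℂ) : ((‖z‖ ^ 2 : ℝ) : ℂ) = z * (starRingEnd ℂ) z := by
  rw [Complex.sq_norm]
  exact (Complex.mul_conj z).symm

lemma unitary_entries {u : Matrix (Fin 2) (Fin 2) ℂ} (hu : u.conjTranspose * u = 1) :
    (starRingEnd ℂ) (u 0 0) * u 0 0 + (starRingEnd ℂ) (u 1 0) * u 1 0 = 1 ∧
    (starRingEnd ℂ) (u 0 1) * u 0 1 + (starRingEnd ℂ) (u 1 1) * u 1 1 = 1 ∧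
    (starRingEnd ℂ) (u 0 0) * u 0 1 + (starRingEnd ℂ) (u 1 0) * u 1 1 = 0 ∧
    (starRingEnd ℂ) (u 0 1) * u 0 0 + (starRingEnd ℂ) (u 1 1) * u 1 0 = 0 := by
  have h00 := congrArg (fun m : Matrix (Fin 2) (Fin 2) ℂ => m 0 0) hu
  have h11 := congrArg (fun m : Matrix (Fin 2) (Fin 2) ℂ => m 1 1) hu
  have h01 := congrArg (fun m : Matrix (Fin 2) (Fin 2) ℂ => m 0 1) hu
  have h10 := congrArg (fun m : Matrix (Fin 2) (Fin 2) ℂ => m 1 0) hu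
  simp only [Matrix.mul_apply, Fin.sum_univ_two, Matrix.conjTranspose_apply,
    Matrix.one_apply, Complex.star_def] at h00 h11 h01 h10
  norm_num at h01 h10
  exact ⟨h00, h11, h01, h10⟩

lemma nrm_act {u : Matrix (Fin 2) (Fin 2) ℂ} (hu : u.conjTranspose * u = 1) (v : ℂ × ℂ) :
    nrm (act u v) = nrm v := by
  obtain ⟨h00, h11, h01, h10⟩ := unitary_entries hu
  unfold nrm act
  congr 1
  have key : ((‖u 0 0 * v.1 + u 0 1 * v.2‖ ^ 2 +
      ‖u 1 0 * v.1 + u 1 1 * v.2‖ ^ 2 : ℝ) : ℂ) =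
      ((‖v.1‖ ^ 2 + ‖v.2‖ ^ 2 : ℝ) : ℂ) := by
    rw [Complex.ofReal_add, Complex.ofReal_add, mc, mc, mc, mc]
    simp only [map_add, map_mul]
    linear_combination (v.1 * (starRingEnd ℂ) v.1) * h00 +
      (v.2 * (starRingEnd ℂ) v.2) * h11 + (v.2 * (starRingEnd ℂ) v.1) * h01 +
      (v.1 * (starRingEnd ℂ) v.2) * h10
  exact_mod_cast key

lemma su2_det_ne {u : Matrix (Fin 2) (Fin 2) ℂ} (hu : SU2 u) : u.det ≠ 0 := by
  rw [hu.1]; exact one_ne_zero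

lemma su2_star {u : Matrix (Fin 2) (Fin 2) ℂ} (hu : SU2 u) : SU2 u.conjTranspose := by
  constructor
  · rw [Matrix.det_conjTranspose, hu.1]
    simp
  · rw [Matrix.conjTranspose_conjTranspose]
    exact mul_eq_one_comm.1 hu.2

lemma su2_mul_star {u : Matrix (Fin 2) (Fin 2) ℂ} (hu : SU2 u) :
    u * u.conjTranspose = 1 := mul_eq_one_comm.1 hu.2

lemma chordal_mobius {u : Matrix (Fin 2) (Fin 2) ℂ} (hu : SU2 u) (z w : Option ℂ) :
    chordal (mobius u z) (mobius u w) = chordal z w := by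
  have hd : u.det ≠ 0 := su2_det_ne hu
  conv_lhs => rw [← proj_lift z, ← proj_lift w]
  rw [mobius_proj _ _ (lift_ne z), mobius_proj _ _ (lift_ne w),
    chordal_proj _ _ (act_ne_zero hd (lift_ne z)) (act_ne_zero hd (lift_ne w)),
    cross_act hu.1, nrm_act hu.2, nrm_act hu.2,
    ← chordal_proj _ _ (lift_ne z) (lift_ne w), proj_lift, proj_lift]

lemma mobius_star_mobius {u : Matrix (Fin 2) (Fin 2) ℂ} (hu : SU2 u) (z : Option ℂ) :
    mobius u.conjTranspose (mobius u z) = z := by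
  rw [← mobius_mul _ _ (su2_det_ne hu), hu.2, mobius_one]

lemma mobius_mobius_star {u : Matrix (Fin 2) (Fin 2) ℂ} (hu : SU2 u) (z : Option ℂ) :
    mobius u (mobius u.conjTranspose z) = z := by
  rw [← mobius_mul _ _ (su2_det_ne (su2_star hu)), su2_mul_star hu, mobius_one]

lemma mobius_injective {u : Matrix (Fin 2) (Fin 2) ℂ} (hu : SU2 u) :
    Function.Injective (mobius u) := by
  intro z w h
  have := congrArg (mobius u.conjTranspose) h
  rwa [mobius_star_mobius hu, mobius_star_mobius hu] at this

lemma image_chordal_set {u : Matrix (Fin 2) (Fin 2) ℂ} (hu : SU2 u) (c : Option ℂ)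
    (P : ℝ → Prop) :
    mobius u '' {z | P (chordal z c)} = {z | P (chordal z (mobius u c))} := by
  ext w
  constructor
  · rintro ⟨z, hz, rfl⟩
    simpa [chordal_mobius hu] using hz
  · intro hw
    refine ⟨mobius u.conjTranspose w, ?_, mobius_mobius_star hu w⟩
    show P (chordal (mobius u.conjTranspose w) c)
    have : chordal (mobius u.conjTranspose w) c = chordal w (mobius u c) := by
      conv_lhs => rw [← mobius_star_mobius hu c]
      rw [chordal_mobius (su2_star hu)]
    rwa [this]

end CPHelp

namespace CPHelp

lemma cond1 {t α : ℝ} (ht : 0 ≤ t) (hα0 : 0 < α) (hα1 : α < 1) :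
    t / Real.sqrt (1 + t ^ 2) ≤ α ↔ t ^ 2 * (1 - α ^ 2) ≤ α ^ 2 := by
  have hs : (0:ℝ) < Real.sqrt (1 + t ^ 2) := Real.sqrt_pos.2 (by positivity)
  have hsq : Real.sqrt (1 + t ^ 2) ^ 2 = 1 + t ^ 2 := Real.sq_sqrt (by positivity)
  rw [div_le_iff₀ hs]
  constructor
  · intro h
    have h2 : t ^ 2 ≤ (α * Real.sqrt (1 + t ^ 2)) ^ 2 := by
      apply pow_le_pow_left₀ ht h
    nlinarith
  · intro h
    have h3 : t ^ 2 ≤ (α * Real.sqrt (1 + t ^ 2)) ^ 2 := by nlinarith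
    have := Real.sqrt_le_sqrt h3
    rwa [Real.sqrt_sq ht, Real.sqrt_sq (by positivity)] at this

lemma cond2 {t : ℝ} (ht : 0 ≤ t) :
    ((1:ℝ)/2 ≤ 1 / Real.sqrt (1 + t ^ 2)) ↔ t ^ 2 ≤ 3 := by
  have hs : (0:ℝ) < Real.sqrt (1 + t ^ 2) := Real.sqrt_pos.2 (by positivity)
  have hsq : Real.sqrt (1 + t ^ 2) ^ 2 = 1 + t ^ 2 := Real.sq_sqrt (by positivity)
  rw [div_le_div_iff₀ (by norm_num) hs]
  constructor
  · intro h
    nlinarith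
  · intro h
    nlinarith [sq_nonneg (Real.sqrt (1 + t ^ 2) - 2), hs.le]

lemma diag_apply (lam : ℂ) :
    Matrix.diagonal ![lam, lam⁻¹] 0 0 = lam ∧ Matrix.diagonal ![lam, lam⁻¹] 0 1 = 0 ∧
    Matrix.diagonal ![lam, lam⁻¹] 1 0 = 0 ∧ Matrix.diagonal ![lam, lam⁻¹] 1 1 = lam⁻¹ := by
  refine ⟨?_, ?_, ?_, ?_⟩ <;> simp [Matrix.diagonal]

lemma mobius_diag {lam : ℂ} (hlam : lam ≠ 0) (z : ℂ) :
    mobius (Matrix.diagonal ![lam, lam⁻¹]) (some z) = some (lam ^ 2 * z) := by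
  obtain ⟨d00, d01, d10, d11⟩ := diag_apply lam
  show (if Matrix.diagonal ![lam, lam⁻¹] 1 0 * z + Matrix.diagonal ![lam, lam⁻¹] 1 1 = 0
      then none else some ((Matrix.diagonal ![lam, lam⁻¹] 0 0 * z +
        Matrix.diagonal ![lam, lam⁻¹] 0 1) / (Matrix.diagonal ![lam, lam⁻¹] 1 0 * z +
        Matrix.diagonal ![lam, lam⁻¹] 1 1))) = some (lam ^ 2 * z)
  rw [d00, d01, d10, d11, if_neg (by simp [hlam])]
  congr 1
  field_simp
  ring

lemma chordal_none_zero : chordal none (some 0) = 1 := by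
  simp [chordal]

lemma chordal_some_zero (z : ℂ) :
    chordal (some z) (some 0) = ‖z‖ / Real.sqrt (1 + ‖z‖ ^ 2) := by
  simp [chordal]

lemma cond_iff {L α : ℝ} (hL : 1 ≤ L) (hαsq : α ^ 2 = 3 / (3 + L ^ 4)) {t : ℝ}
    (ht : 0 ≤ t) : t * (1 - α ^ 2) ≤ α ^ 2 * L ^ 4 ↔ t ≤ 3 := by
  have hL2 : (1:ℝ) ≤ L ^ 2 := by nlinarith
  have hL4 : (0:ℝ) < L ^ 4 := by nlinarith
  have h2 : (0:ℝ) < 3 + L ^ 4 := by nlinarith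
  have h1 : α ^ 2 * (3 + L ^ 4) = 3 := by
    rw [hαsq]
    field_simp
  have hα2 : 0 < 1 - α ^ 2 := by
    have : α ^ 2 < 1 := by
      rw [hαsq, div_lt_one h2]
      nlinarith
    linarith
  constructor
  · intro h
    nlinarith
  · intro h
    nlinarith

lemma core {lam : ℂ} (hlam : 1 ≤ ‖lam‖) {α : ℝ} (hα0 : 0 < α) (hα1 : α < 1) :
    mobius (Matrix.diagonal ![lam, lam⁻¹]) '' Dclosed (some 0) α = (Dopen none (1/2))ᶜ ↔
      α = Real.sqrt (3 / (3 + ‖lam‖ ^ 4)) := by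
  have hlam0 : lam ≠ 0 := by
    intro h
    rw [h] at hlam
    simp at hlam
    linarith
  set L := ‖lam‖ with hLdef
  have hL1 : 1 ≤ L := hlam
  have hL0 : 0 < L := by linarith
  have hL4 : (0:ℝ) < L ^ 4 := by positivity
  have h1α : 0 < 1 - α ^ 2 := by nlinarith
  have himg : mobius (Matrix.diagonal ![lam, lam⁻¹]) '' Dclosed (some 0) α =
      {x | ∃ w : ℂ, x = some w ∧ ‖w‖ ^ 2 * (1 - α ^ 2) ≤ α ^ 2 * L ^ 4} := by
    ext x
    constructor
    · rintro ⟨z, hz, rfl⟩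
      cases z with
      | none =>
          exfalso
          have h1 : chordal none (some 0) ≤ α := hz
          rw [chordal_none_zero] at h1
          linarith
      | some z =>
          refine ⟨lam ^ 2 * z, (mobius_diag hlam0 z).symm ▸ rfl, ?_⟩
          have hz' : chordal (some z) (some 0) ≤ α := hz
          rw [chordal_some_zero, cond1 (norm_nonneg z) hα0 hα1] at hz'
          have habs : ‖lam ^ 2 * z‖ ^ 2 = L ^ 4 * ‖z‖ ^ 2 := by
            rw [norm_mul, norm_pow, ← hLdef]
            ring
          rw [habs]
          nlinarith [sq_nonneg α]
    · rintro ⟨w, rfl, hw⟩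
      refine ⟨some (w / lam ^ 2), ?_, ?_⟩
      · show chordal (some (w / lam ^ 2)) (some 0) ≤ α
        rw [chordal_some_zero, cond1 (norm_nonneg _) hα0 hα1]
        have habs : ‖w / lam ^ 2‖ ^ 2 = ‖w‖ ^ 2 / L ^ 4 := by
          rw [norm_div, norm_pow, div_pow, ← hLdef]
          ring_nf
        rw [habs, div_mul_eq_mul_div, div_le_iff₀ hL4]
        nlinarith
      · rw [mobius_diag hlam0]
        congr 1
        field_simp
  have hrhs : (Dopen none (1/2 : ℝ))ᶜ =
      {x | ∃ w : ℂ, x = some w ∧ ‖w‖ ^ 2 ≤ 3} := by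
    ext x
    cases x with
    | none =>
        constructor
        · intro hx
          exfalso
          apply hx
          show chordal none none < 1/2
          norm_num [chordal]
        · rintro ⟨w, hw, -⟩
          exact absurd hw (by simp)
    | some w =>
        constructor
        · intro hx
          refine ⟨w, rfl, ?_⟩
          have : ¬ (chordal (some w) none < 1/2) := hx
          rw [not_lt] at this
          have hc : chordal (some w) none = 1 / Real.sqrt (1 + ‖w‖ ^ 2) := rfl
          rw [hc] at this
          exact (cond2 (norm_nonneg w)).1 this
        · rintro ⟨w', hw', hle⟩
          have hww : w = w' := Option.some_inj.1 hw'
          subst hww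
          show ¬ (chordal (some w) none < 1/2)
          rw [not_lt]
          have hc : chordal (some w) none = 1 / Real.sqrt (1 + ‖w‖ ^ 2) := rfl
          rw [hc]
          exact (cond2 (norm_nonneg w)).2 hle
  rw [himg, hrhs]
  constructor
  · intro h
    have m1 : (some ((Real.sqrt 3 : ℝ) : ℂ) : Option ℂ) ∈
        {x | ∃ w : ℂ, x = some w ∧ ‖w‖ ^ 2 ≤ 3} := by
      refine ⟨_, rfl, ?_⟩
      rw [Complex.norm_real, Real.norm_eq_abs, _root_.abs_of_nonneg (Real.sqrt_nonneg 3),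
        Real.sq_sqrt (by norm_num : (0:ℝ) ≤ 3)]
    rw [← h] at m1
    obtain ⟨w, hw, hcond⟩ := m1
    have hww : ((Real.sqrt 3 : ℝ) : ℂ) = w := Option.some_inj.1 hw
    rw [← hww, Complex.norm_real, Real.norm_eq_abs, _root_.abs_of_nonneg (Real.sqrt_nonneg 3),
      Real.sq_sqrt (by norm_num : (0:ℝ) ≤ 3)] at hcond
    -- hcond : 3 * (1 - α^2) ≤ α^2 * L^4
    set t0 : ℝ := Real.sqrt (α ^ 2 * L ^ 4 / (1 - α ^ 2)) with ht0
    have ht0sq : t0 ^ 2 = α ^ 2 * L ^ 4 / (1 - α ^ 2) :=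
      Real.sq_sqrt (by positivity)
    have m2 : (some ((t0 : ℝ) : ℂ) : Option ℂ) ∈
        {x | ∃ w : ℂ, x = some w ∧ ‖w‖ ^ 2 * (1 - α ^ 2) ≤ α ^ 2 * L ^ 4} := by
      refine ⟨_, rfl, ?_⟩
      rw [Complex.norm_real, Real.norm_eq_abs, _root_.abs_of_nonneg (Real.sqrt_nonneg _), ht0sq,
        div_mul_cancel₀ _ (ne_of_gt h1α)]
    rw [h] at m2
    obtain ⟨w', hw', hcond'⟩ := m2
    have hww' : ((t0 : ℝ) : ℂ) = w' := Option.some_inj.1 hw'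
    rw [← hww', Complex.norm_real, Real.norm_eq_abs, _root_.abs_of_nonneg (Real.sqrt_nonneg _), ht0sq] at hcond'
    have hcond'' : α ^ 2 * L ^ 4 ≤ 3 * (1 - α ^ 2) := by
      rw [div_le_iff₀ h1α] at hcond'
      linarith
    have heq : α ^ 2 * L ^ 4 = 3 * (1 - α ^ 2) := le_antisymm hcond'' hcond
    have hαsq : α ^ 2 = 3 / (3 + L ^ 4) := by
      rw [eq_div_iff (by positivity)]
      linarith
    rw [show α = Real.sqrt (α ^ 2) by rw [Real.sqrt_sq hα0.le], hαsq]
  · intro h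
    have hαsq : α ^ 2 = 3 / (3 + L ^ 4) := by
      rw [h, Real.sq_sqrt (by positivity)]
    ext x
    simp only [mem_setOf_eq]
    constructor
    · rintro ⟨w, rfl, hw⟩
      exact ⟨w, rfl, (cond_iff hL1 hαsq (sq_nonneg (‖w‖))).1 hw⟩
    · rintro ⟨w, rfl, hw⟩
      exact ⟨w, rfl, (cond_iff hL1 hαsq (sq_nonneg (‖w‖))).2 hw⟩

end CPHelp

namespace CPHelp

lemma nrm_fst (a : ℂ) : nrm (a, 0) = ‖a‖ := by
  unfold nrm
  simp only [norm_zero]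
  rw [show ‖a‖ ^ 2 + (0:ℝ) ^ 2 = ‖a‖ ^ 2 by ring,
    Real.sqrt_sq (norm_nonneg a)]

lemma euclid_coord (g : Matrix (Fin 2) (Fin 2) ℂ) (x : EuclideanSpace ℂ (Fin 2)) :
    ((Matrix.toEuclideanLin g) x 0, (Matrix.toEuclideanLin g) x 1) = act g (x 0, x 1) := by
  have e0 : (Matrix.toEuclideanLin g) x 0 = g 0 0 * x 0 + g 0 1 * x 1 := by
    simp [Matrix.toEuclideanLin_apply, Matrix.mulVec, dotProduct, Fin.sum_univ_two]
  have e1 : (Matrix.toEuclideanLin g) x 1 = g 1 0 * x 0 + g 1 1 * x 1 := by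
    simp [Matrix.toEuclideanLin_apply, Matrix.mulVec, dotProduct, Fin.sum_univ_two]
  rw [e0, e1]
  rfl

lemma norm_eq_nrm (x : EuclideanSpace ℂ (Fin 2)) : ‖x‖ = nrm (x 0, x 1) := by
  rw [EuclideanSpace.norm_eq, Fin.sum_univ_two]
  unfold nrm
  simp

lemma norm_toEuclideanLin (g : Matrix (Fin 2) (Fin 2) ℂ) (x : EuclideanSpace ℂ (Fin 2)) :
    ‖(Matrix.toEuclideanLin g) x‖ = nrm (act g (x 0, x 1)) := by
  rw [norm_eq_nrm, euclid_coord]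

lemma nrm_diag_le {lam : ℂ} (hlam : 1 ≤ ‖lam‖) (v : ℂ × ℂ) :
    nrm (act (Matrix.diagonal ![lam, lam⁻¹]) v) ≤ ‖lam‖ * nrm v := by
  obtain ⟨d00, d01, d10, d11⟩ := diag_apply lam
  have hL0 : 0 < ‖lam‖ := lt_of_lt_of_le one_pos hlam
  unfold act nrm
  rw [d00, d01, d10, d11]
  simp only [zero_mul, add_zero, zero_add, norm_mul, norm_inv]
  have hinv : (‖lam‖)⁻¹ ≤ 1 := inv_le_one_of_one_le₀ hlam
  have hinv0 : 0 ≤ (‖lam‖)⁻¹ := inv_nonneg.2 hL0.le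
  have key : (‖lam‖ * ‖v.1‖) ^ 2 +
      ((‖lam‖)⁻¹ * ‖v.2‖) ^ 2 ≤
      ‖lam‖ ^ 2 * (‖v.1‖ ^ 2 + ‖v.2‖ ^ 2) := by
    have h2 : ((‖lam‖)⁻¹) ^ 2 ≤ ‖lam‖ ^ 2 := by nlinarith
    nlinarith [sq_nonneg (‖v.1‖), sq_nonneg (‖v.2‖)]
  calc Real.sqrt ((‖lam‖ * ‖v.1‖) ^ 2 +
        ((‖lam‖)⁻¹ * ‖v.2‖) ^ 2)
      ≤ Real.sqrt (‖lam‖ ^ 2 * (‖v.1‖ ^ 2 + ‖v.2‖ ^ 2)) :=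
        Real.sqrt_le_sqrt key
    _ = ‖lam‖ * Real.sqrt (‖v.1‖ ^ 2 + ‖v.2‖ ^ 2) := by
        rw [Real.sqrt_mul (sq_nonneg _), Real.sqrt_sq hL0.le]

lemma opNorm_eq {g k k' : Matrix (Fin 2) (Fin 2) ℂ} {lam : ℂ}
    (hk : SU2 k) (hk' : SU2 k') (hlam : 1 ≤ ‖lam‖)
    (hdec : g = k * Matrix.diagonal ![lam, lam⁻¹] * k') :
    opNorm g = ‖lam‖ := by
  set a := Matrix.diagonal ![lam, lam⁻¹] with ha
  have hL0 : 0 < ‖lam‖ := lt_of_lt_of_le one_pos hlam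
  have hact : ∀ v, act g v = act k (act a (act k' v)) := by
    intro v
    rw [hdec, act_mul, act_mul]
  have happ : ∀ x : EuclideanSpace ℂ (Fin 2),
      ‖(LinearMap.toContinuousLinearMap (Matrix.toEuclideanLin g)) x‖ =
      nrm (act k (act a (act k' (x 0, x 1)))) := by
    intro x
    rw [show (LinearMap.toContinuousLinearMap (Matrix.toEuclideanLin g)) x =
      (Matrix.toEuclideanLin g) x from rfl, norm_toEuclideanLin, hact]
  unfold opNorm
  apply le_antisymm
  · apply ContinuousLinearMap.opNorm_le_bound _ hL0.le
    intro x
    rw [happ, nrm_act hk.2, norm_eq_nrm]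
    calc nrm (act a (act k' (x 0, x 1)))
        ≤ ‖lam‖ * nrm (act k' (x 0, x 1)) := nrm_diag_le hlam _
      _ = ‖lam‖ * nrm (x 0, x 1) := by rw [nrm_act hk'.2]
  · set v : ℂ × ℂ := act k'.conjTranspose (1, 0) with hv
    set x : EuclideanSpace ℂ (Fin 2) := (WithLp.equiv 2 (Fin 2 → ℂ)).symm ![v.1, v.2]
      with hx
    have hx0 : x 0 = v.1 := rfl
    have hx1 : x 1 = v.2 := rfl
    have hkv : act k' v = (1, 0) := by
      rw [hv, ← act_mul, su2_mul_star hk', act_one]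
    have hnx : ‖x‖ = 1 := by
      rw [norm_eq_nrm, hx0, hx1, show (v.1, v.2) = v from rfl, hv,
        nrm_act (su2_star hk').2]
      unfold nrm
      norm_num
    have haone : act a (1, 0) = (lam, 0) := by
      obtain ⟨d00, d01, d10, d11⟩ := diag_apply lam
      unfold act
      rw [ha, d00, d01, d10, d11]
      simp
    have hTx : ‖(LinearMap.toContinuousLinearMap (Matrix.toEuclideanLin g)) x‖ =
        ‖lam‖ := by
      rw [happ, hx0, hx1, show (v.1, v.2) = v from rfl, hkv, haone, nrm_act hk.2,
        nrm_fst]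
    calc ‖lam‖
        = ‖(LinearMap.toContinuousLinearMap (Matrix.toEuclideanLin g)) x‖ := hTx.symm
      _ ≤ ‖LinearMap.toContinuousLinearMap (Matrix.toEuclideanLin g)‖ * ‖x‖ :=
          ContinuousLinearMap.le_opNorm _ x
      _ = ‖LinearMap.toContinuousLinearMap (Matrix.toEuclideanLin g)‖ := by
          rw [hnx, mul_one]

end CPHelp

namespace CPHelp

lemma image_dclosed {u : Matrix (Fin 2) (Fin 2) ℂ} (hu : SU2 u) (c : Option ℂ) (β : ℝ) :
    mobius u '' Dclosed c β = Dclosed (mobius u c) β :=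
  image_chordal_set hu c (fun t => t ≤ β)

lemma image_dopen_compl {u : Matrix (Fin 2) (Fin 2) ℂ} (hu : SU2 u) (c : Option ℂ) (β : ℝ) :
    mobius u '' (Dopen c β)ᶜ = (Dopen (mobius u c) β)ᶜ := by
  have e1 : (Dopen c β)ᶜ = {z | ¬ (chordal z c < β)} := Set.compl_setOf _
  have e2 : (Dopen (mobius u c) β)ᶜ = {z | ¬ (chordal z (mobius u c) < β)} :=
    Set.compl_setOf _
  rw [e1, e2]
  exact image_chordal_set hu c (fun t => ¬ (t < β))

end CPHelp

open CPHelp in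
theorem sl2_image_closed_disc_iff (γ : SL2) (hγ : 1 < opNorm ↑γ)
    (k k' : Matrix (Fin 2) (Fin 2) ℂ) (lam : ℂ)
    (hk : SU2 k) (hk' : SU2 k') (hlam : 1 ≤ ‖lam‖)
    (hdec : (↑γ : Matrix (Fin 2) (Fin 2) ℂ) = k * Matrix.diagonal ![lam, lam⁻¹] * k')
    (s n : Option ℂ) (hs : s = mobius k'⁻¹ (some 0)) (hn : n = mobius k none)
    (α : ℝ) (hα : α ∈ Set.Ioo (0:ℝ) 1) :
    mobius ↑γ '' Dclosed s α = (Dopen n (1/2))ᶜ ↔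
      α = Real.sqrt (3 / (3 + opNorm ↑γ ^ 4)) := by
  obtain ⟨hα0, hα1⟩ := hα
  have hlam0 : lam ≠ 0 := by
    intro h
    rw [h] at hlam
    simp at hlam
    linarith
  have hdeta : (Matrix.diagonal ![lam, lam⁻¹]).det ≠ 0 := by
    rw [Matrix.det_diagonal]
    simp [Fin.prod_univ_two, hlam0]
  have hdk' : k'.det ≠ 0 := su2_det_ne hk'
  have hN : opNorm (↑γ : Matrix (Fin 2) (Fin 2) ℂ) = ‖lam‖ :=
    opNorm_eq hk hk' hlam hdec
  rw [hN]
  have hcomp : ∀ z, mobius (↑γ : Matrix (Fin 2) (Fin 2) ℂ) z =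
      mobius k (mobius (Matrix.diagonal ![lam, lam⁻¹]) (mobius k' z)) := by
    intro z
    rw [hdec, mobius_mul _ _ hdk', mobius_mul _ _ hdeta]
  have himage : mobius (↑γ : Matrix (Fin 2) (Fin 2) ℂ) '' Dclosed s α =
      mobius k '' (mobius (Matrix.diagonal ![lam, lam⁻¹]) ''
        (mobius k' '' Dclosed s α)) := by
    rw [← Set.image_comp, ← Set.image_comp]
    exact Set.image_congr (fun z _ => hcomp z)
  have hs0 : mobius k' s = some 0 := by
    rw [hs, Matrix.inv_eq_left_inv hk'.2, ← mobius_mul _ _ (su2_det_ne (su2_star hk')),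
      su2_mul_star hk', mobius_one]
  have h1 : mobius k' '' Dclosed s α = Dclosed (some 0) α := by
    rw [image_dclosed hk' s α, hs0]
  have h2 : (Dopen n (1/2 : ℝ))ᶜ = mobius k '' (Dopen (none : Option ℂ) (1/2))ᶜ := by
    rw [image_dopen_compl hk none (1/2), ← hn]
  rw [himage, h1, h2, Set.image_eq_image (mobius_injective hk)]
  exact core hlam hα0 hα1
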